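/- Let F_q be a finite field, E a field extension of F_q of degree m, ρ : E → Mat_{m×m}(F_q) the regular representation (a ↦ matrix of multiplication by a), n₁n₂ = n, and Φ₂ : E^n → (n₁m × n₂m matrices over F_q) the induced two-dimensional expansion. Let 0 < k < n and ℓ ≥ 1, assume ⌊√(⌊(n−k)/(2ℓ)⌋)⌋ ≥ 1, and let C ⊆ E^n have minimum Hamming distance at least n−k+1. Set x = m·(⌊√(⌊(n−k)/(2ℓ)⌋)⌋ − 1) + 1. Then Φ₂(C) corrects any ℓ square bursts of side at most x each: for all c, c′ ∈ C and all e, e′ whose supports are each covered by a union of ℓ squares of side x with contiguous rows and columns, Φ₂(c) + e = Φ₂(c′) + e′ implies c = c′. -/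

import Mathlib

/-- The linear (row-major) index of position `j` in the `i`-th block of length `m`. -/
def finIdx {n m : ℕ} (i : Fin n) (j : Fin m) : Fin (n * m) :=
  ⟨i.1 * m + j.1, by
    have h1 : i.1 + 1 ≤ n := i.2
    have h2 : j.1 < m := j.2
    calc i.1 * m + j.1 < (i.1 + 1) * m := by nlinarith
      _ ≤ n * m := Nat.mul_le_mul_right m h1⟩

/-- `ℓ` square bursts of side (at most) `x` each: a matrix whose support is covered
by a union of `ℓ` squares of side `x` with contiguous rows and columns. -/
def IsSquareBurstUnion {F : Type*} [Zero F] {R C : ℕ} (ℓ x : ℕ)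
    (e : Matrix (Fin R) (Fin C) F) : Prop :=
  ∃ p q : Fin ℓ → ℕ, ∀ i j, e i j ≠ 0 → ∃ t : Fin ℓ,
    p t ≤ (i : ℕ) ∧ (i : ℕ) < p t + x ∧ q t ≤ (j : ℕ) ∧ (j : ℕ) < q t + x

/-- An interval `[pt, pt + (m*(s-1)+1))` meets at most `s` consecutive blocks of
length `m`, starting at block `pt / m`. -/
lemma block_loc {m s pt r u : ℕ} (hm : 0 < m) (hs : 1 ≤ s) (hu : u < m)
    (h1 : pt ≤ r * m + u) (h2 : r * m + u < pt + (m * (s - 1) + 1)) :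
    ∃ a, a < s ∧ r = pt / m + a := by
  have hrm : r * m + m = (r + 1) * m := by ring
  have hle : pt / m ≤ r := by
    have h3 : pt < (r + 1) * m := by nlinarith
    have := (Nat.div_lt_iff_lt_mul hm).mpr h3
    omega
  have hub : r ≤ pt / m + (s - 1) := by
    have hrm2 : r * m ≤ pt + m * (s - 1) := by omega
    have h4 : r ≤ (pt + m * (s - 1)) / m := (Nat.le_div_iff_mul_le hm).mpr hrm2
    have h5 : (pt + m * (s - 1)) / m = pt / m + (s - 1) := Nat.add_mul_div_left pt (s - 1) hm
    omega
  exact ⟨r - pt / m, by omega, by omega⟩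

/-- The two-dimensional expansion via the regular representation
`ρ : E → Mat_{m×m}(F)` of a code `C ⊆ E^n` of minimum distance at least `n - k + 1`
corrects any `ℓ` square bursts of side at most `x = m(⌊√⌊(n-k)/(2ℓ)⌋⌋ - 1) + 1` each. -/
theorem regular_expansion_corrects_multiple_square_bursts
    {F E : Type*} [Field F] [Fintype F] [DecidableEq F]
    [Field E] [Algebra F E] [DecidableEq E]
    (m n n₁ n₂ k ℓ : ℕ) (b : Module.Basis (Fin m) F E)
    (ρ : E → Matrix (Fin m) (Fin m) F)
    (hρ : ρ = fun a => LinearMap.toMatrix b b (LinearMap.mulLeft F a))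
    (hn₁ : 0 < n₁) (hn₂ : 0 < n₂) (hn : n₁ * n₂ = n)
    (Φ₂ : (Fin n → E) → Matrix (Fin (n₁ * m)) (Fin (n₂ * m)) F)
    (hΦ : ∀ (x : Fin n → E) (r : Fin n₁) (c : Fin n₂) (u v : Fin m),
      Φ₂ x (finIdx r u) (finIdx c v) = ρ (x (Fin.cast hn (finIdx r c))) u v)
    (hk : 0 < k) (hkn : k < n) (hℓ : 1 ≤ ℓ)
    (hsq : 1 ≤ Nat.sqrt ((n - k) / (2 * ℓ)))
    (C : Set (Fin n → E))
    (hC : ∀ c ∈ C, ∀ c' ∈ C, c ≠ c' → n - k + 1 ≤ hammingDist c c') :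
    ∀ c ∈ C, ∀ c' ∈ C, ∀ e e' : Matrix (Fin (n₁ * m)) (Fin (n₂ * m)) F,
      IsSquareBurstUnion ℓ (m * (Nat.sqrt ((n - k) / (2 * ℓ)) - 1) + 1) e →
      IsSquareBurstUnion ℓ (m * (Nat.sqrt ((n - k) / (2 * ℓ)) - 1) + 1) e' →
      Φ₂ c + e = Φ₂ c' + e' → c = c' := by
  classical
  intro c hc c' hc' e e' he he' heq
  by_contra hne
  set s := Nat.sqrt ((n - k) / (2 * ℓ)) with hs
  have hm : 0 < m := by
    obtain ⟨i⟩ := b.index_nonempty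
    exact i.pos
  obtain ⟨pe, qe, hpe⟩ := he
  obtain ⟨pe', qe', hpe'⟩ := he'
  -- entrywise difference identity
  have hdiff : ∀ i j, e' i j - e i j = Φ₂ c i j - Φ₂ c' i j := by
    intro i j
    have h := congrFun (congrFun heq i) j
    simp only [Matrix.add_apply] at h
    linear_combination -h
  -- ρ is injective
  have hρinj : Function.Injective ρ := by
    intro a a' h
    rw [hρ] at h
    have h2 : LinearMap.mulLeft F a = LinearMap.mulLeft F a' :=
      (LinearMap.toMatrix b b).injective h
    have := LinearMap.congr_fun h2 1
    simpa using this
  -- the codomain of our injection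
  let T := (Fin ℓ × Fin s × Fin s) ⊕ (Fin ℓ × Fin s × Fin s)
  -- the predicate recording where a differing position lands
  let Q : Fin n → T → Prop := fun p z =>
    match z with
    | Sum.inl (t, a, b') => (p : ℕ) / n₂ = pe t / m + (a : ℕ) ∧ (p : ℕ) % n₂ = qe t / m + (b' : ℕ)
    | Sum.inr (t, a, b') => (p : ℕ) / n₂ = pe' t / m + (a : ℕ) ∧ (p : ℕ) % n₂ = qe' t / m + (b' : ℕ)
  have key : ∀ p : Fin n, c p ≠ c' p → ∃ z : T, Q p z := by
    intro p hp
    -- the block coordinates of p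
    have hpn : (p : ℕ) < n₁ * n₂ := by rw [hn]; exact p.2
    have hrlt : (p : ℕ) / n₂ < n₁ := (Nat.div_lt_iff_lt_mul hn₂).mpr (by
      calc (p : ℕ) < n₁ * n₂ := hpn
        _ = n₁ * n₂ := rfl)
    have hclt : (p : ℕ) % n₂ < n₂ := Nat.mod_lt _ hn₂
    set r : Fin n₁ := ⟨(p : ℕ) / n₂, hrlt⟩
    set col : Fin n₂ := ⟨(p : ℕ) % n₂, hclt⟩
    have hrecon : (Fin.cast hn (finIdx r col)) = p := by
      apply Fin.ext
      show (p : ℕ) / n₂ * n₂ + (p : ℕ) % n₂ = (p : ℕ)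
      calc (p : ℕ) / n₂ * n₂ + (p : ℕ) % n₂
          = n₂ * ((p : ℕ) / n₂) + (p : ℕ) % n₂ := by rw [Nat.mul_comm]
        _ = (p : ℕ) := Nat.div_add_mod _ _
    -- the blocks differ
    have hblock : ρ (c p) ≠ ρ (c' p) := fun h => hp (hρinj h)
    obtain ⟨u, v, huv⟩ : ∃ u v, ρ (c p) u v ≠ ρ (c' p) u v := by
      by_contra h
      push_neg at h
      exact hblock (by ext u v; exact h u v)
    have hE : e' (finIdx r u) (finIdx col v) - e (finIdx r u) (finIdx col v) ≠ 0 := by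
      rw [hdiff, hΦ, hΦ, hrecon]
      exact sub_ne_zero_of_ne huv
    have hiu : ((finIdx r u : Fin (n₁ * m)) : ℕ) = (p : ℕ) / n₂ * m + (u : ℕ) := rfl
    have hjv : ((finIdx col v : Fin (n₂ * m)) : ℕ) = (p : ℕ) % n₂ * m + (v : ℕ) := rfl
    rcases ne_or_eq (e (finIdx r u) (finIdx col v)) 0 with h0 | h0
    · obtain ⟨t, ht1, ht2, ht3, ht4⟩ := hpe _ _ h0
      rw [hiu] at ht1 ht2
      rw [hjv] at ht3 ht4
      obtain ⟨a, ha, ha'⟩ := block_loc hm hsq u.2 ht1 ht2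
      obtain ⟨b', hb, hb'⟩ := block_loc hm hsq v.2 ht3 ht4
      exact ⟨Sum.inl (t, ⟨a, ha⟩, ⟨b', hb⟩), ha', hb'⟩
    · have h1 : e' (finIdx r u) (finIdx col v) ≠ 0 := by
        intro h1; rw [h0, h1] at hE; simp at hE
      obtain ⟨t, ht1, ht2, ht3, ht4⟩ := hpe' _ _ h1
      rw [hiu] at ht1 ht2
      rw [hjv] at ht3 ht4
      obtain ⟨a, ha, ha'⟩ := block_loc hm hsq u.2 ht1 ht2
      obtain ⟨b', hb, hb'⟩ := block_loc hm hsq v.2 ht3 ht4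
      exact ⟨Sum.inr (t, ⟨a, ha⟩, ⟨b', hb⟩), ha', hb'⟩
  -- build the injection on the set of differing positions
  set D : Finset (Fin n) := Finset.univ.filter (fun i => c i ≠ c' i) with hD
  let f : Fin n → T := fun p =>
    if h : c p ≠ c' p then (key p h).choose
    else Sum.inl (⟨0, hℓ⟩, ⟨0, hsq⟩, ⟨0, hsq⟩)
  have hinj : Set.InjOn f D := by
    intro p hp p' hp' hfp
    rw [hD, Finset.coe_filter] at hp hp'
    have hp1 : c p ≠ c' p := hp.2
    have hp2 : c p' ≠ c' p' := hp'.2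
    simp only [f, dif_pos hp1, dif_pos hp2] at hfp
    have hq1 : Q p ((key p hp1).choose) := (key p hp1).choose_spec
    have hq2 : Q p' ((key p' hp2).choose) := (key p' hp2).choose_spec
    rw [hfp] at hq1
    have hdm : (p : ℕ) / n₂ = (p' : ℕ) / n₂ ∧ (p : ℕ) % n₂ = (p' : ℕ) % n₂ := by
      rcases hz : (key p' hp2).choose with z | z <;> rw [hz] at hq1 hq2 <;>
        obtain ⟨t, a, b'⟩ := z <;>
        exact ⟨hq1.1.trans hq2.1.symm, hq1.2.trans hq2.2.symm⟩
    apply Fin.ext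
    have e1 := Nat.div_add_mod (p : ℕ) n₂
    have e2 := Nat.div_add_mod (p' : ℕ) n₂
    have e3 : n₂ * ((p : ℕ) / n₂) = n₂ * ((p' : ℕ) / n₂) := by rw [hdm.1]
    omega
  have hcard : D.card ≤ Fintype.card T := by
    have := Finset.card_le_card_of_injOn f (fun p _ => Finset.mem_univ (f p)) hinj
    simpa using this
  have hT : Fintype.card T = 2 * (ℓ * (s * s)) := by
    simp [T, Fintype.card_sum, Fintype.card_prod]
    ring
  have hss : s * s ≤ (n - k) / (2 * ℓ) := Nat.sqrt_le _
  have hbound : 2 * ℓ * ((n - k) / (2 * ℓ)) ≤ n - k := by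
    calc 2 * ℓ * ((n - k) / (2 * ℓ)) = (n - k) / (2 * ℓ) * (2 * ℓ) := by ring
      _ ≤ n - k := Nat.div_mul_le_self _ _
  have hcard2 : D.card ≤ n - k := by
    calc D.card ≤ 2 * (ℓ * (s * s)) := hT ▸ hcard
      _ ≤ 2 * (ℓ * ((n - k) / (2 * ℓ))) := by
          exact Nat.mul_le_mul_left 2 (Nat.mul_le_mul_left ℓ hss)
      _ = 2 * ℓ * ((n - k) / (2 * ℓ)) := by ring
      _ ≤ n - k := hbound
  have hham : hammingDist c c' = D.card := rfl
  have := hC c hc c' hc' hne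
  omega
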